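/- Let Ω be nonempty and X, Y uncertain variables with finite ranges. The maximal non-stochastic brute-force leakage L⋆(X → Y) := sup over functions g (with finite codomain, U = g∘X) of L(U → Y) equals log₂(|⟦X⟧| − min_{y ∈ ⟦Y⟧} |⟦X | Y = y⟧| + 1). -/

import Mathlib

open Set

/-- Conditional range ⟦X | Y = y⟧ = {X ω : Y ω = y}. -/
def crange {Ω 𝕏 𝕐 : Type*} (X : Ω → 𝕏) (Y : Ω → 𝕐) (y : 𝕐) : Set 𝕏 :=
  {x | ∃ ω, Y ω = y ∧ X ω = x}

/-- min_{y ∈ ⟦Y⟧} |⟦X | Y = y⟧|. -/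
noncomputable def minCond {Ω 𝕏 𝕐 : Type*} (X : Ω → 𝕏) (Y : Ω → 𝕐) : ℕ :=
  sInf ((fun y => (crange X Y y).ncard) '' Set.range Y)

/-- Non-stochastic brute-force guessing leakage
L(X → Y) = log₂(|⟦X⟧| / min_{y ∈ ⟦Y⟧} |⟦X|Y=y⟧|). -/
noncomputable def leak {Ω 𝕏 𝕐 : Type*} (X : Ω → 𝕏) (Y : Ω → 𝕐) : ℝ :=
  Real.logb 2 (((Set.range X).ncard : ℝ) / (minCond X Y : ℝ))

/-- Maximal non-stochastic brute-force leakage (closed formula)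
L⋆(X → Y) = log₂(|⟦X⟧| − min_{y∈⟦Y⟧}|⟦X|Y=y⟧| + 1). -/
noncomputable def maxLeak {Ω 𝕏 𝕐 : Type*} (X : Ω → 𝕏) (Y : Ω → 𝕐) : ℝ :=
  Real.logb 2 (((Set.range X).ncard : ℝ) - (minCond X Y : ℝ) + 1)

universe u

lemma crange_subset_range {Ω 𝕏 𝕐 : Type*} (X : Ω → 𝕏) (Y : Ω → 𝕐) (y : 𝕐) :
    crange X Y y ⊆ Set.range X := by
  rintro x ⟨ω, _, rfl⟩; exact ⟨ω, rfl⟩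

lemma crange_nonempty {Ω 𝕏 𝕐 : Type*} (X : Ω → 𝕏) (Y : Ω → 𝕐) {y : 𝕐}
    (hy : y ∈ Set.range Y) : (crange X Y y).Nonempty := by
  obtain ⟨ω, rfl⟩ := hy
  exact ⟨X ω, ω, rfl, rfl⟩

lemma crange_comp {Ω 𝕏 𝕐 𝕌 : Type*} (g : 𝕏 → 𝕌) (X : Ω → 𝕏) (Y : Ω → 𝕐) (y : 𝕐) :
    crange (g ∘ X) Y y = g '' crange X Y y := by
  ext u
  constructor
  · rintro ⟨ω, hω, rfl⟩; exact ⟨X ω, ⟨ω, hω, rfl⟩, rfl⟩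
  · rintro ⟨x, ⟨ω, hω, rfl⟩, rfl⟩; exact ⟨ω, hω, rfl⟩

theorem stmt_8 {Ω 𝕏 𝕐 : Type u} [Nonempty Ω] (X : Ω → 𝕏) (Y : Ω → 𝕐)
    (hX : (Set.range X).Finite) (hY : (Set.range Y).Finite) :
    (∀ (𝕌 : Type u) (g : 𝕏 → 𝕌),
        leak (g ∘ X) Y ≤
          Real.logb 2 (((Set.range X).ncard : ℝ) - (minCond X Y : ℝ) + 1)) ∧
    (∃ (𝕌 : Type u) (g : 𝕏 → 𝕌),
        leak (g ∘ X) Y =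
          Real.logb 2 (((Set.range X).ncard : ℝ) - (minCond X Y : ℝ) + 1)) := by
  classical
  set n := (Set.range X).ncard with hn
  set m := minCond X Y with hm
  have hYne : (Set.range Y).Nonempty := Set.range_nonempty Y
  have hCfin : ∀ y : 𝕐, (crange X Y y).Finite :=
    fun y => hX.subset (crange_subset_range X Y y)
  -- m is attained at some y₀
  have hmmem : m ∈ (fun y => (crange X Y y).ncard) '' Set.range Y :=
    Nat.sInf_mem (hYne.image _)
  obtain ⟨y₀, hy₀, hy₀card⟩ := hmmem
  have hm_le : ∀ y ∈ Set.range Y, m ≤ (crange X Y y).ncard := by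
    intro y hy
    exact Nat.sInf_le ⟨y, hy, rfl⟩
  have hm_pos : 1 ≤ m := by
    rw [← hy₀card]
    exact (Set.ncard_pos (hCfin y₀)).mpr (crange_nonempty X Y hy₀)
  have hmn : m ≤ n := by
    rw [← hy₀card]
    exact Set.ncard_le_ncard (crange_subset_range X Y y₀) hX
  have hn_pos : 1 ≤ n := (Set.ncard_pos hX).mpr (Set.range_nonempty X)
  constructor
  · -- upper bound
    intro 𝕌 g
    have hrangeg : Set.range (g ∘ X) = g '' Set.range X := Set.range_comp g X
    have hGfin : (Set.range (g ∘ X)).Finite := by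
      rw [hrangeg]; exact hX.image g
    set N := (Set.range (g ∘ X)).ncard with hN
    set M := minCond (g ∘ X) Y with hM
    -- M is attained at some y₁
    have hMmem : M ∈ (fun y => (crange (g ∘ X) Y y).ncard) '' Set.range Y :=
      Nat.sInf_mem (hYne.image _)
    obtain ⟨y₁, hy₁, hy₁card'⟩ := hMmem
    have hy₁card : (crange (g ∘ X) Y y₁).ncard = M := hy₁card'
    have hCfin1 : (crange X Y y₁).Finite := hCfin y₁
    have hM_pos : 1 ≤ M := by
      rw [← hy₁card]
      exact (Set.ncard_pos ((hGfin.subset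
        (crange_subset_range (g ∘ X) Y y₁)))).mpr (crange_nonempty (g ∘ X) Y hy₁)
    set m₁ := (crange X Y y₁).ncard with hm₁
    have hmm₁ : m ≤ m₁ := hm_le y₁ hy₁
    have hm₁n : m₁ ≤ n := Set.ncard_le_ncard (crange_subset_range X Y y₁) hX
    -- N ≤ M + (n - m₁)
    have hsplit : Set.range (g ∘ X) =
        g '' crange X Y y₁ ∪ g '' (Set.range X \ crange X Y y₁) := by
      rw [hrangeg, ← Set.image_union, Set.union_diff_cancel (crange_subset_range X Y y₁)]
    have hNle : N ≤ M + (n - m₁) := by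
      have h1 : N ≤ (g '' crange X Y y₁).ncard +
          (g '' (Set.range X \ crange X Y y₁)).ncard := by
        rw [hN, hsplit]; exact Set.ncard_union_le _ _
      have h2 : (g '' (Set.range X \ crange X Y y₁)).ncard ≤
          (Set.range X \ crange X Y y₁).ncard :=
        Set.ncard_image_le hX.diff
      have h3 : (Set.range X \ crange X Y y₁).ncard = n - m₁ :=
        Set.ncard_diff (crange_subset_range X Y y₁) hCfin1
      have h4 : (g '' crange X Y y₁).ncard = M := by
        rw [← crange_comp g X Y y₁]; exact hy₁card
      omega
    have hkey : N + m ≤ M + n := by omega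
    -- now the real inequality
    have hdiv : (N : ℝ) / (M : ℝ) ≤ (n : ℝ) - (m : ℝ) + 1 := by
      rw [div_le_iff₀ (by exact_mod_cast hM_pos : (0:ℝ) < M)]
      have hM1 : (1:ℝ) ≤ M := by exact_mod_cast hM_pos
      have hmn' : (m:ℝ) ≤ n := by exact_mod_cast hmn
      have hkey' : (N:ℝ) + m ≤ (M:ℝ) + n := by exact_mod_cast hkey
      nlinarith [mul_nonneg (sub_nonneg.mpr hM1) (sub_nonneg.mpr hmn')]
    have hN_pos : 1 ≤ N := (Set.ncard_pos hGfin).mpr (Set.range_nonempty _)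
    have hpos1 : (0:ℝ) < (N : ℝ) / (M : ℝ) := by
      apply div_pos <;> [exact_mod_cast hN_pos; exact_mod_cast hM_pos]
    have hpos2 : (0:ℝ) < (n : ℝ) - (m : ℝ) + 1 := by
      have : (m:ℝ) ≤ n := by exact_mod_cast hmn
      linarith
    unfold leak
    exact (Real.logb_le_logb one_lt_two hpos1 hpos2).mpr hdiv
  · -- attainment
    obtain ⟨c₀, hc₀⟩ := crange_nonempty X Y hy₀
    set C := crange X Y y₀ with hC
    refine ⟨𝕏, fun x => if x ∈ C then c₀ else x, ?_⟩
    set g : 𝕏 → 𝕏 := fun x => if x ∈ C then c₀ else x with hg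
    have hgC : g '' C = {c₀} := by
      apply Set.Subset.antisymm
      · rintro u ⟨x, hx, rfl⟩
        simp [hg, hx]
      · simp only [Set.singleton_subset_iff]
        exact ⟨c₀, hc₀, if_pos hc₀⟩
    have hrangeg : Set.range (g ∘ X) = insert c₀ (Set.range X \ C) := by
      rw [Set.range_comp]
      apply Set.Subset.antisymm
      · rintro u ⟨x, hx, rfl⟩
        by_cases hxC : x ∈ C
        · simp only [hg, if_pos hxC]
          exact Set.mem_insert _ _
        · simp only [hg, if_neg hxC]
          exact Set.mem_insert_of_mem _ ⟨hx, hxC⟩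
      · rintro u hu
        rcases hu with h | ⟨hu1, hu2⟩
        · refine ⟨c₀, crange_subset_range X Y y₀ hc₀, ?_⟩
          rw [h]; exact if_pos hc₀
        · exact ⟨u, hu1, if_neg hu2⟩
    have hGfin : (Set.range (g ∘ X)).Finite := by
      rw [hrangeg]; exact (hX.diff.insert c₀)
    have hNcard : (Set.range (g ∘ X)).ncard = n - m + 1 := by
      rw [hrangeg, Set.ncard_insert_of_notMem (fun h => h.2 hc₀) hX.diff,
        Set.ncard_diff (crange_subset_range X Y y₀) (hCfin y₀), ← hy₀card]
    have hMone : minCond (g ∘ X) Y = 1 := by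
      apply le_antisymm
      · have : minCond (g ∘ X) Y ≤ (crange (g ∘ X) Y y₀).ncard :=
          Nat.sInf_le ⟨y₀, hy₀, rfl⟩
        rwa [crange_comp, ← hC, hgC, Set.ncard_singleton] at this
      · have hMmem : minCond (g ∘ X) Y ∈
            (fun y => (crange (g ∘ X) Y y).ncard) '' Set.range Y :=
          Nat.sInf_mem (hYne.image _)
        obtain ⟨y₁, hy₁, hy₁card'⟩ := hMmem
        have hy₁card : (crange (g ∘ X) Y y₁).ncard = minCond (g ∘ X) Y := hy₁card'
        rw [← hy₁card]
        have hfin : (crange (g ∘ X) Y y₁).Finite := by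
          rw [crange_comp]; exact ((hCfin y₁).image g)
        exact (Set.ncard_pos hfin).mpr (crange_nonempty (g ∘ X) Y hy₁)
    unfold leak
    rw [hNcard, hMone]
    have : ((n - m + 1 : ℕ) : ℝ) = (n : ℝ) - (m : ℝ) + 1 := by
      have : m ≤ n := hmn
      push_cast [Nat.sub_add_cancel, this]
      ring
    rw [Nat.cast_one, div_one, this]
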